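/- Let m be odd and gcd(s, m) = 1. For a ∈ F_{2^m}, Σ_{x ∈ F_{2^m}} (-1)^{Tr^m_1(x^{2^s+1} + a x)} = 0 if and only if Tr^m_1(a) = 0. -/
import Mathlib

set_option linter.unusedSectionVars false
set_option linter.unusedVariables false

open Finset

def chi {F : Type*} [Field F] [DecidableEq F] (m : ℕ) (y : F) : ℤ :=
  if (∑ i ∈ Finset.range m, y ^ 2 ^ i) = 0 then 1 else -1

namespace Ks

variable {F : Type*} [Field F] [Fintype F] [DecidableEq F] {m : ℕ}

def tr (m : ℕ) {F : Type*} [Field F] (y : F) : F := ∑ i ∈ Finset.range m, y ^ 2 ^ i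

lemma chi_def (y : F) : chi m y = if tr m y = 0 then 1 else -1 := rfl

lemma pow_card_eq (hF : Fintype.card F = 2 ^ m) (x : F) : x ^ 2 ^ m = x := by
  rw [← hF]; exact FiniteField.pow_card x

lemma char_two (hF : Fintype.card F = 2 ^ m) (hm : m ≠ 0) : CharP F 2 := by
  obtain ⟨n, hp, hcard⟩ := FiniteField.card F (ringChar F)
  have hdvd : ringChar F ∣ 2 ^ m := by
    rw [← hF, hcard]
    exact dvd_pow_self _ (by exact_mod_cast n.pos.ne')
  have : ringChar F = 2 :=
    (Nat.prime_dvd_prime_iff_eq hp Nat.prime_two).mp (hp.dvd_of_dvd_pow hdvd)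
  exact this ▸ ringChar.charP F

lemma pow_pow_add (x : F) (a b : ℕ) : x ^ 2 ^ (a + b) = (x ^ 2 ^ a) ^ 2 ^ b := by
  rw [pow_add, pow_mul]

lemma pow_pow_mul (hF : Fintype.card F = 2 ^ m) (x : F) (q : ℕ) : x ^ 2 ^ (m * q) = x := by
  induction q with
  | zero => simp
  | succ q ih => rw [Nat.mul_succ, pow_pow_add, ih, pow_card_eq hF]

lemma fix_pow_mul {d : ℕ} {h : F} (hd : h ^ 2 ^ d = h) (t : ℕ) : h ^ 2 ^ (d * t) = h := by
  induction t with
  | zero => simp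
  | succ t ih => rw [Nat.mul_succ, pow_pow_add, ih, hd]

lemma tr_add [CharP F 2] (y z : F) : tr m (y + z) = tr m y + tr m z := by
  simp [tr, add_pow_char_pow, Finset.sum_add_distrib]

lemma shift_sum (hF : Fintype.card F = 2 ^ m) (y : F) :
    ∑ i ∈ Finset.range m, y ^ 2 ^ (i + 1) = tr m y := by
  have h1 := Finset.sum_range_succ (fun i => y ^ 2 ^ i) m
  have h2 := Finset.sum_range_succ' (fun i => y ^ 2 ^ i) m
  have := h1.symm.trans h2
  simp only [pow_zero, pow_one, pow_card_eq hF] at this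
  exact (add_right_cancel this.symm)

lemma tr_sq [CharP F 2] (hF : Fintype.card F = 2 ^ m) (y : F) : tr m y ^ 2 = tr m y :=
  calc tr m y ^ 2 = ∑ i ∈ Finset.range m, y ^ 2 ^ (i + 1) := by
        rw [tr, sum_pow_char]
        exact Finset.sum_congr rfl fun i _ => by rw [← pow_mul, ← pow_succ]
    _ = tr m y := shift_sum hF y

lemma tr_frob [CharP F 2] (hF : Fintype.card F = 2 ^ m) (y : F) : tr m (y ^ 2) = tr m y :=
  calc tr m (y ^ 2) = ∑ i ∈ Finset.range m, y ^ 2 ^ (i + 1) := by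
        rw [tr]
        exact Finset.sum_congr rfl fun i _ => by rw [← pow_mul, ← pow_succ']
    _ = tr m y := shift_sum hF y

lemma tr_frob_pow [CharP F 2] (hF : Fintype.card F = 2 ^ m) (y : F) (k : ℕ) :
    tr m (y ^ 2 ^ k) = tr m y := by
  induction k with
  | zero => simp
  | succ k ih => rw [pow_succ, pow_mul, tr_frob hF, ih]

lemma tr_zero_or_one [CharP F 2] (hF : Fintype.card F = 2 ^ m) (y : F) :
    tr m y = 0 ∨ tr m y = 1 := by
  have h := tr_sq hF y
  have : tr m y * (tr m y - 1) = 0 := by linear_combination h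
  rcases mul_eq_zero.mp this with h' | h'
  · exact Or.inl h'
  · exact Or.inr (by linear_combination h')

lemma tr_zero : tr m (0 : F) = 0 := by
  refine Finset.sum_eq_zero fun i _ => zero_pow (by positivity)

lemma tr_one [CharP F 2] (hm : Odd m) : tr m (1 : F) = 1 := by
  obtain ⟨k, hk⟩ := hm
  have h2 : (2 : F) = 0 := by exact_mod_cast CharP.cast_eq_zero F 2
  have hm' : (m : F) = 1 := by rw [hk]; push_cast; rw [h2]; ring
  rw [tr]
  simp only [one_pow, Finset.sum_const, Finset.card_range, nsmul_eq_mul, mul_one]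
  exact hm'

lemma chi_zero : chi m (0 : F) = 1 := by rw [chi_def, if_pos tr_zero]

lemma chi_add [CharP F 2] (hF : Fintype.card F = 2 ^ m) (y z : F) :
    chi m (y + z) = chi m y * chi m z := by
  rw [chi_def, chi_def, chi_def, tr_add]
  rcases tr_zero_or_one hF y with hy | hy <;> rcases tr_zero_or_one hF z with hz | hz <;>
    rw [hy, hz] <;> simp [CharTwo.add_self_eq_zero]

lemma chi_congr (y z : F) (h : tr m y = tr m z) : chi m y = chi m z := by
  rw [chi_def, chi_def, h]

lemma chi_mul_self (y : F) : chi m y * chi m y = 1 := by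
  rw [chi_def]; split <;> norm_num


lemma exists_tr_ne_zero [CharP F 2] (hm : m ≠ 0) (hF : Fintype.card F = 2 ^ m) :
    ∃ z : F, tr m z ≠ 0 := by
  by_contra hcon
  push_neg at hcon
  set P : Polynomial F := ∑ i ∈ Finset.range m, Polynomial.X ^ (2 ^ i) with hP
  have heval : ∀ z : F, P.eval z = 0 := by
    intro z
    have := hcon z
    rw [tr] at this
    simpa [hP, Polynomial.eval_finset_sum] using this
  have hdeg : P.natDegree < Fintype.card F := by
    have h1 : P.natDegree ≤ 2 ^ (m - 1) := by
      refine Polynomial.natDegree_sum_le_of_forall_le _ _ fun i hi => ?_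
      rw [Polynomial.natDegree_X_pow]
      exact Nat.pow_le_pow_right (by norm_num) (by
        have := Finset.mem_range.mp hi; omega)
    have h2 : (2 : ℕ) ^ (m - 1) < 2 ^ m := Nat.pow_lt_pow_right (by norm_num) (by omega)
    rw [hF]; omega
  have hP0 : P = 0 :=
    Polynomial.eq_zero_of_natDegree_lt_card_of_eval_eq_zero P Function.injective_id
      (fun z => heval z) hdeg
  have hc : P.coeff (2 ^ (m - 1)) = 1 := by
    rw [hP, Polynomial.finset_sum_coeff]
    have : ∀ i ∈ Finset.range m,
        (Polynomial.X ^ (2 ^ i) : Polynomial F).coeff (2 ^ (m - 1))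
          = if m - 1 = i then 1 else 0 := by
      intro i hi
      rw [Polynomial.coeff_X_pow]
      congr 1
      simp only [eq_iff_iff]
      constructor
      · intro h; exact Nat.pow_right_injective (le_refl 2) h
      · intro h; rw [h]
    rw [Finset.sum_congr rfl this, Finset.sum_ite_eq]
    simp [Finset.mem_range, Nat.sub_lt (Nat.pos_of_ne_zero hm) one_pos]
  rw [hP0] at hc
  simp at hc

lemma sum_chi_eq_zero [CharP F 2] (hm : m ≠ 0) (hF : Fintype.card F = 2 ^ m) :
    ∑ z : F, chi m z = 0 := by
  obtain ⟨z0, hz0⟩ := exists_tr_ne_zero hm hF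
  have hchi : chi m z0 = -1 := by rw [chi_def, if_neg hz0]
  have h1 : ∑ z : F, chi m z = ∑ z : F, chi m (z + z0) :=
    (Fintype.sum_equiv (Equiv.addRight z0) _ _ (fun z => rfl)).symm
  have h2 : ∀ z : F, chi m (z + z0) = - chi m z := by
    intro z; rw [chi_add hF, hchi]; ring
  rw [Finset.sum_congr rfl (fun z _ => h2 z), Finset.sum_neg_distrib] at h1
  linarith

lemma sum_chi_linear [CharP F 2] (hm : m ≠ 0) (hF : Fintype.card F = 2 ^ m) (c : F) :
    ∑ y : F, chi m (y * c) = if c = 0 then (2 ^ m : ℤ) else 0 := by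
  split
  · next hc =>
    subst hc
    simp only [mul_zero, chi_zero, Finset.sum_const, Finset.card_univ, hF, nsmul_eq_mul, mul_one]
    push_cast; ring
  · next hc =>
    have : ∑ y : F, chi m (y * c) = ∑ z : F, chi m z :=
      Fintype.sum_equiv (Equiv.mulRight₀ c hc) _ _ (fun z => rfl)
    rw [this, sum_chi_eq_zero hm hF]


lemma bezout {r n : ℕ} (hn : 2 ≤ n) (h : Nat.Coprime r n) :
    ∃ t u : ℕ, r * t = n * u + 1 := by
  refine ⟨((r : ZMod n)⁻¹).val, (r * ((r : ZMod n)⁻¹).val) / n, ?_⟩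
  have h1 : ((r * ((r : ZMod n)⁻¹).val : ℕ) : ZMod n) = ((1 : ℕ) : ZMod n) := by
    push_cast
    exact_mod_cast ZMod.mul_val_inv h
  have h2 := (ZMod.natCast_eq_natCast_iff' _ _ _).mp h1
  rw [Nat.one_mod_eq_one.mpr (by omega)] at h2
  have h3 := Nat.div_add_mod (r * ((r : ZMod n)⁻¹).val) n
  omega

lemma radical (hmodd : Odd m) (hF : Fintype.card F = 2 ^ m) {r : ℕ} (hr : Nat.gcd r m = 1)
    {h : F} (hh : h ^ 2 ^ (2 * r) = h) : h ^ 2 = h := by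
  have hm0 : m ≠ 0 := by rintro rfl; exact absurd hmodd (by simp)
  by_cases hm1 : m = 1
  · have := pow_card_eq hF h
    rw [hm1] at this
    simpa using this
  · have hm2 : 2 ≤ m := by omega
    have hrpos : 0 < 2 * r := by
      rcases Nat.eq_zero_or_pos r with rfl | hp
      · simp at hr; omega
      · omega
    have hcop : Nat.Coprime (2 * r) m := Nat.Coprime.mul hmodd.coprime_two_left hr
    obtain ⟨t, u, htu⟩ := bezout hm2 hcop
    have h1 : h ^ 2 ^ (2 * r * t) = h := fix_pow_mul hh t
    rw [htu, pow_pow_add, pow_pow_mul hF] at h1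
    simpa using h1

end Ks

open Ks in
theorem stmt_12 (m s : ℕ) (hmodd : Odd m) (hsm : Nat.gcd s m = 1)
    (F : Type*) [Field F] [Fintype F] [DecidableEq F]
    (hF : Fintype.card F = 2 ^ m) (a : F) :
    (∑ x : F, chi m (x ^ (2 ^ s + 1) + a * x)) = 0 ↔
      (∑ i ∈ Finset.range m, a ^ 2 ^ i) = 0 := by
  have hm0 : m ≠ 0 := by rintro rfl; exact absurd hmodd (by simp)
  haveI : CharP F 2 := char_two hF hm0
  show _ ↔ tr m a = 0
  by_cases hm1 : m = 1
  · -- the case m = 1 : F ≅ 𝔽₂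
    subst hm1
    have hx : ∀ x : F, x = 0 ∨ x = 1 := by
      intro x
      have h2 := pow_card_eq hF x
      have : x * (x - 1) = 0 := by
        simp only [pow_one] at h2
        linear_combination h2
      rcases mul_eq_zero.mp this with h' | h'
      · exact Or.inl h'
      · exact Or.inr (by linear_combination h')
    have huniv : (Finset.univ : Finset F) = {0, 1} := by
      ext x
      simpa using hx x
    rw [huniv, Finset.sum_pair (zero_ne_one)]
    have htra : tr 1 a = a := by simp [tr]
    have e0 : (0 : F) ^ (2 ^ s + 1) + a * 0 = 0 := by
      rw [zero_pow (by positivity), mul_zero, add_zero]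
    have e1 : (1 : F) ^ (2 ^ s + 1) + a * 1 = 1 + a := by rw [one_pow, mul_one]
    rw [e0, e1, chi_zero, htra]
    rcases hx a with rfl | rfl
    · have : tr 1 (1 + (0:F)) = 1 := by simp [tr]
      rw [chi_def, if_neg (by rw [this]; exact one_ne_zero)]
      norm_num
    · have h11 : (1 : F) + 1 = 0 := CharTwo.add_self_eq_zero 1
      rw [h11, chi_zero]
      norm_num
  · -- main case m ≥ 2
    have hm2 : 2 ≤ m := by omega
    set r := s % m with hrdef
    have hr1 : Nat.gcd r m = 1 := by
      rw [hrdef, ← Nat.gcd_rec, Nat.gcd_comm]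
      exact hsm
    have hrpos : 0 < r := by
      rcases Nat.eq_zero_or_pos r with h0 | h
      · rw [h0] at hr1; simp at hr1; omega
      · exact h
    have hrlt : r < m := Nat.mod_lt _ (by omega)
    have hpow_r : ∀ x : F, x ^ 2 ^ s = x ^ 2 ^ r := by
      intro x
      calc x ^ 2 ^ s = x ^ 2 ^ (m * (s / m) + r) := by rw [Nat.div_add_mod]
        _ = (x ^ 2 ^ (m * (s / m))) ^ 2 ^ r := pow_pow_add x _ _
        _ = x ^ 2 ^ r := by rw [pow_pow_mul hF]
    set g : F → F := fun x => x ^ 2 ^ r * x + a * x with hgdef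
    have hfg : ∀ x : F, x ^ (2 ^ s + 1) + a * x = g x := by
      intro x
      rw [hgdef, pow_add, pow_one, hpow_r]
    rw [Finset.sum_congr rfl fun x _ => by rw [hfg]]
    set S : ℤ := ∑ x : F, chi m (g x) with hSdef
    set c : F → F := fun h => h ^ 2 ^ (m - r) + h ^ 2 ^ r with hcdef
    -- the key trace identity
    have hcross : ∀ y h : F, tr m (y ^ 2 ^ r * h + y * h ^ 2 ^ r) = tr m (y * c h) := by
      intro y h
      have e1 : tr m (y ^ 2 ^ r * h) = tr m (y * h ^ 2 ^ (m - r)) := by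
        rw [← tr_frob_pow hF (y ^ 2 ^ r * h) (m - r), mul_pow, ← pow_mul, ← pow_add,
          show r + (m - r) = m from by omega, pow_card_eq hF]
      have e2 : y * c h = y * h ^ 2 ^ (m - r) + y * h ^ 2 ^ r := by
        show y * (h ^ 2 ^ (m - r) + h ^ 2 ^ r) = _
        ring
      rw [tr_add, e2, tr_add, e1]
    have hkey : ∀ y h : F, chi m (g (y + h)) =
        chi m (g y) * (chi m (g h) * chi m (y * c h)) := by
      intro y h
      have hexp : g (y + h) = g y + (g h + (y ^ 2 ^ r * h + y * h ^ 2 ^ r)) := by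
        simp only [hgdef]
        rw [add_pow_char_pow]
        ring
      rw [hexp, chi_add hF]
      congr 1
      rw [chi_add hF]
      congr 1
      exact chi_congr _ _ (hcross y h)
    -- auxiliary sum fact
    have hsum_shift : ∀ y : F, (∑ h : F, chi m (g (y + h))) = S :=
      fun y => Fintype.sum_equiv (Equiv.addLeft y) _ _ fun h => rfl
    have hSS : S * S = ∑ h : F, chi m (g h) * (if c h = 0 then (2 ^ m : ℤ) else 0) := by
      calc S * S = ∑ y : F, chi m (g y) * S := by rw [← Finset.sum_mul]
        _ = ∑ y : F, ∑ h : F, chi m (g y) * chi m (g (y + h)) := by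
            refine Finset.sum_congr rfl fun y _ => ?_
            rw [← hsum_shift y, Finset.mul_sum]
        _ = ∑ y : F, ∑ h : F, chi m (g h) * chi m (y * c h) := by
            refine Finset.sum_congr rfl fun y _ => Finset.sum_congr rfl fun h _ => ?_
            rw [hkey y h, ← mul_assoc, chi_mul_self]
            ring
        _ = ∑ h : F, ∑ y : F, chi m (g h) * chi m (y * c h) := Finset.sum_comm
        _ = ∑ h : F, chi m (g h) * (if c h = 0 then (2 ^ m : ℤ) else 0) := by
            refine Finset.sum_congr rfl fun h _ => ?_
            rw [← Finset.mul_sum, sum_chi_linear hm0 hF]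
    -- the radical is {0, 1}
    have hc0 : ∀ h : F, c h = 0 ↔ h = 0 ∨ h = 1 := by
      intro h
      constructor
      · intro hch
        have heq : h ^ 2 ^ (m - r) = h ^ 2 ^ r := by
          have hch' : h ^ 2 ^ (m - r) + h ^ 2 ^ r = 0 := hch
          rwa [add_eq_zero_iff_eq_neg, CharTwo.neg_eq] at hch'
        have h2r : h ^ 2 ^ (2 * r) = h := by
          have hc2 := congrArg (fun z : F => z ^ 2 ^ r) heq
          simp only [← pow_pow_add] at hc2
          rw [show m - r + r = m from by omega, pow_card_eq hF,
            show r + r = 2 * r from by ring] at hc2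
          exact hc2.symm
        have hsq := radical hmodd hF hr1 h2r
        have : h * (h - 1) = 0 := by linear_combination hsq
        rcases mul_eq_zero.mp this with h' | h'
        · exact Or.inl h'
        · exact Or.inr (by linear_combination h')
      · rintro (rfl | rfl)
        · show (0 : F) ^ 2 ^ (m - r) + (0 : F) ^ 2 ^ r = 0
          rw [zero_pow (by positivity), zero_pow (by positivity), add_zero]
        · show (1 : F) ^ 2 ^ (m - r) + (1 : F) ^ 2 ^ r = 0
          rw [one_pow, one_pow]
          exact CharTwo.add_self_eq_zero 1
    have hSS2 : S * S = 2 ^ m + chi m (1 + a) * 2 ^ m := by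
      rw [hSS]
      have step : ∀ h : F, chi m (g h) * (if c h = 0 then (2 ^ m : ℤ) else 0)
          = if h ∈ ({0, 1} : Finset F) then chi m (g h) * 2 ^ m else 0 := by
        intro h
        rw [mul_ite, mul_zero]
        exact if_congr ((hc0 h).trans (by simp)) rfl rfl
      rw [Finset.sum_congr rfl fun h _ => step h, Finset.sum_ite_mem, Finset.univ_inter,
        Finset.sum_pair (zero_ne_one)]
      have hg0 : g 0 = 0 := by simp [hgdef]
      have hg1 : g 1 = 1 + a := by simp [hgdef]
      rw [hg0, hg1, chi_zero, one_mul]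
    -- conclude
    have hpos : (0 : ℤ) < 2 ^ m := by positivity
    rcases tr_zero_or_one hF a with ha | ha
    · have h1a : tr m (1 + a) = 1 := by rw [tr_add, tr_one hmodd, ha, add_zero]
      have hch : chi m (1 + a) = -1 := by
        rw [chi_def, if_neg (by rw [h1a]; exact one_ne_zero)]
      rw [hch] at hSS2
      have hS0 : S = 0 := by
        have : S * S = 0 := by rw [hSS2]; ring
        exact mul_self_eq_zero.mp this
      simp [hS0, ha]
    · have h1a : tr m (1 + a) = 0 := by
        rw [tr_add, tr_one hmodd, ha]
        exact CharTwo.add_self_eq_zero 1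
      have hch : chi m (1 + a) = 1 := by rw [chi_def, if_pos h1a]
      rw [hch, one_mul] at hSS2
      have hSne : S ≠ 0 := by
        intro h0
        rw [h0] at hSS2
        simp at hSS2
        linarith
      have hane : tr m a ≠ 0 := by rw [ha]; exact one_ne_zero
      exact iff_of_false hSne hane
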